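/- There exists a finite non-reduced multiplicative lattice L for which the chromatic number of the zero-divisor graph Γᵐ(L) strictly exceeds its clique number: χ(Γᵐ(L)) = 4 > 3 = Clique(Γᵐ(L)). -/

import Mathlib

variable {α : Type*}

/-- Iterated product `a^n` in a multiplicative lattice (with `a^0 = ⊤`). -/
def mpow [CompleteLattice α] (mul : α → α → α) (a : α) : ℕ → α
  | 0 => ⊤
  | n + 1 => mul a (mpow mul a n)

/-- `mul` makes the complete lattice `α` into a multiplicative lattice. -/
def IsMulLattice [CompleteLattice α] (mul : α → α → α) : Prop :=
  (∀ a b : α, mul a b = mul b a) ∧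
  (∀ a b c : α, mul (mul a b) c = mul a (mul b c)) ∧
  (∀ (a : α) (s : Set α), mul a (sSup s) = ⨆ b ∈ s, mul a b) ∧
  (∀ a b : α, mul a b ≤ a ⊓ b) ∧
  (∀ a : α, mul a ⊤ = a)

/-- The multiplicative lattice is reduced: the only nilpotent element is `⊥`. -/
def LatReduced [CompleteLattice α] (mul : α → α → α) : Prop :=
  ∀ (a : α) (n : ℕ), mpow mul a (n + 1) = ⊥ → a = ⊥

/-- `a* = sup {x | x·a = 0}`. -/
def starAnn [CompleteLattice α] (mul : α → α → α) (a : α) : α :=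
  sSup {x : α | mul x a = ⊥}

/-- A prime element of a multiplicative lattice. -/
def IsPrimeElt [CompleteLattice α] (mul : α → α → α) (p : α) : Prop :=
  p ≠ ⊤ ∧ ∀ a b : α, mul a b ≤ p → a ≤ p ∨ b ≤ p

/-- The zero-divisor graph `Γᵐ(L)` of a multiplicative lattice. -/
def zdg [CompleteLattice α] (mul : α → α → α) : SimpleGraph α where
  Adj a b := a ≠ b ∧ a ≠ ⊥ ∧ b ≠ ⊥ ∧ mul a b = ⊥ ∧ mul b a = ⊥
  symm := ⟨fun a b h => ⟨h.1.symm, h.2.2.1, h.2.1, h.2.2.2.2, h.2.2.2.1⟩⟩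
  loopless := ⟨fun a h => h.1 rfl⟩

/-- `Clique(Γᵐ(L)) < ∞`. -/
def CliqueBounded [CompleteLattice α] (mul : α → α → α) : Prop :=
  ∃ N : ℕ, ∀ s : Finset α, (zdg mul).IsClique ↑s → s.card ≤ N

/-! ### Auxiliary construction: the 14-element pentagon lattice -/

/-- The 14-element multiplicative lattice: `⊥ < f <` five atoms-of-`f`-level
elements `a,…,e` (pentagon) `<` five joins of pentagon-adjacent pairs `< v < ⊤`. -/
inductive B : Type
  | bot | f | va | vb | vc | vd | ve | pab | pbc | pcd | pde | pea | v | top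
  deriving DecidableEq

namespace B

instance : Fintype B :=
  ⟨⟨↑[bot, f, va, vb, vc, vd, ve, pab, pbc, pcd, pde, pea, v, top], by decide⟩,
    fun x => by cases x <;> decide⟩

/-- Support bitmask over the pentagon vertices `a=1, b=2, c=4, d=8, e=16`. -/
def s : B → ℕ
  | bot => 0 | f => 0 | top => 0
  | va => 1 | vb => 2 | vc => 4 | vd => 8 | ve => 16
  | pab => 3 | pbc => 6 | pcd => 12 | pde => 24 | pea => 17
  | v => 31

def ble (x y : B) : Bool :=
  x = bot || y = top || (x ≠ top && y ≠ bot && (s x ||| s y == s y))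

instance : LE B := ⟨fun x y => ble x y = true⟩

instance : DecidableRel (· ≤ · : B → B → Prop) := fun x y =>
  inferInstanceAs (Decidable (ble x y = true))

def maskJoin : ℕ → B
  | 1 => va | 2 => vb | 4 => vc | 8 => vd | 16 => ve
  | 3 => pab | 6 => pbc | 12 => pcd | 24 => pde | 17 => pea
  | 0 => f
  | _ => v

def maskMeet : ℕ → B
  | 1 => va | 2 => vb | 4 => vc | 8 => vd | 16 => ve
  | _ => f

def bsup (x y : B) : B :=
  if ble x y then y else if ble y x then x else maskJoin (s x ||| s y)

def binf (x y : B) : B :=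
  if ble x y then x else if ble y x then y else maskMeet (s x &&& s y)

instance : Lattice B where
  le := (· ≤ ·)
  le_refl := by decide
  le_trans := by decide
  le_antisymm := by decide
  sup := bsup
  le_sup_left := by decide
  le_sup_right := by decide
  sup_le := by decide
  inf := binf
  inf_le_left := by decide
  inf_le_right := by decide
  le_inf := by decide

instance : BoundedOrder B where
  top := top
  le_top := by decide
  bot := bot
  bot_le := by decide

noncomputable instance : CompleteLattice B := Fintype.toCompleteLattice B

/-- The closed pentagon neighborhood of a support mask. -/
def nbm (m : ℕ) : ℕ := (m ||| ((m <<< 1) ||| (m >>> 4)) ||| ((m <<< 4) ||| (m >>> 1))) &&& 31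

/-- The multiplication: `⊤` is the identity, and for `x, y ≠ ⊤` the product is
`f` when the supports of `x` and `y` touch in the pentagon and `⊥` otherwise. -/
def mulB (x y : B) : B :=
  if x = top then y else if y = top then x
  else if s x &&& nbm (s y) ≠ 0 then f else bot

noncomputable instance : DecidableRel (zdg mulB).Adj := fun x y =>
  inferInstanceAs (Decidable
    (x ≠ y ∧ x ≠ ⊥ ∧ y ≠ ⊥ ∧ mulB x y = ⊥ ∧ mulB y x = ⊥))

end B

/-- A `⊥`- and `⊔`-preserving map preserves finite suprema. -/
theorem finDistrib {γ : Type} [CompleteLattice γ] (g : γ → γ) (h0 : g ⊥ = ⊥)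
    (h2 : ∀ x y : γ, g (x ⊔ y) = g x ⊔ g y) (s : Set γ) (hs : s.Finite) :
    g (sSup s) = ⨆ b ∈ s, g b := by
  induction s, hs using Set.Finite.induction_on with
  | empty => simpa using h0
  | insert _ _ ih => rw [sSup_insert, h2, ih, iSup_insert]

theorem beck_fails_nonreduced :
    ∃ (β : Type) (_ : Fintype β) (_ : CompleteLattice β) (mul : β → β → β),
      IsMulLattice mul ∧ ¬ LatReduced mul ∧
      (zdg mul).chromaticNumber = 4 ∧ (zdg mul).cliqueNum = 3 := by
  refine ⟨B, inferInstance, inferInstance, B.mulB, ?_, ?_, ?_, ?_⟩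
  · refine ⟨by decide, by decide, ?_, by decide, by decide⟩
    intro a s
    exact finDistrib (B.mulB a)
      ((by decide : ∀ a : B, B.mulB a ⊥ = ⊥) a)
      (fun x y => (by decide : ∀ a x y : B, B.mulB a (x ⊔ y) = B.mulB a x ⊔ B.mulB a y) a x y)
      s (Set.toFinite s)
  · intro h
    have := h B.f 1 (by decide)
    exact absurd this (by decide)
  · -- chromatic number = 4
    have hc4 : (zdg B.mulB).Colorable 4 := by
      refine ⟨SimpleGraph.Coloring.mk (fun x => match x with
        | B.bot => 0 | B.top => 0 | B.f => 0
        | B.va => 1 | B.vb => 2 | B.vc => 2 | B.vd => 3 | B.ve => 1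
        | B.pab => 1 | B.pbc => 2 | B.pcd => 2 | B.pde => 1 | B.pea => 1
        | B.v => (1 : Fin 4)) ?_⟩
      intro x y h
      revert h
      revert x y
      decide
    have hn3 : ¬ (zdg B.mulB).Colorable 3 := by
      rintro ⟨C⟩
      exact (by decide : ∀ x0 x1 x2 x3 x4 x5 : Fin 3,
          x0 ≠ x1 → x0 ≠ x2 → x0 ≠ x3 → x0 ≠ x4 → x0 ≠ x5 →
          x1 ≠ x3 → x3 ≠ x5 → x5 ≠ x2 → x2 ≠ x4 → x4 ≠ x1 → False)
        (C B.f) (C B.va) (C B.vb) (C B.vc) (C B.vd) (C B.ve)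
        (C.valid (by decide)) (C.valid (by decide)) (C.valid (by decide))
        (C.valid (by decide)) (C.valid (by decide)) (C.valid (by decide))
        (C.valid (by decide)) (C.valid (by decide)) (C.valid (by decide))
        (C.valid (by decide))
    have hle : (zdg B.mulB).chromaticNumber ≤ 4 := by
      simpa using hc4.chromaticNumber_le
    have hgt : (3 : ℕ∞) < (zdg B.mulB).chromaticNumber := by
      by_contra h
      push_neg at h
      exact hn3 (SimpleGraph.chromaticNumber_le_iff_colorable.mp (by exact_mod_cast h))
    refine le_antisymm hle ?_
    have := Order.add_one_le_of_lt hgt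
    calc (4 : ℕ∞) = 3 + 1 := by norm_num
      _ ≤ _ := this
  · -- clique number = 3
    have mem3 : ∃ t : Finset B, (zdg B.mulB).IsNClique 3 t := by
      refine ⟨{B.f, B.va, B.vc}, ?_, by decide⟩
      intro x hx y hy hxy
      exact (by decide : ∀ x ∈ ({B.f, B.va, B.vc} : Finset B),
        ∀ y ∈ ({B.f, B.va, B.vc} : Finset B), x ≠ y → (zdg B.mulB).Adj x y)
        x (Finset.mem_coe.mp hx) y (Finset.mem_coe.mp hy) hxy
    have cf4 : ∀ w x y z : B, (zdg B.mulB).Adj w x → (zdg B.mulB).Adj w y →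
        (zdg B.mulB).Adj w z → (zdg B.mulB).Adj x y → (zdg B.mulB).Adj x z →
        (zdg B.mulB).Adj y z → False := by
      set_option maxRecDepth 4000 in decide
    have bound : ∀ n ∈ {n | ∃ t, (zdg B.mulB).IsNClique n t}, n ≤ 3 := by
      rintro n ⟨t, htc, hcard⟩
      by_contra hn
      push_neg at hn
      obtain ⟨u, hu, hucard⟩ := Finset.exists_subset_card_eq (show 4 ≤ t.card by omega)
      obtain ⟨w, hw⟩ := Finset.card_pos.mp (show 0 < u.card by omega)
      have he : (u.erase w).card = 3 := by rw [Finset.card_erase_of_mem hw, hucard]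
      obtain ⟨x, y, z, hxy, hxz, hyz, hxyz⟩ := Finset.card_eq_three.mp he
      have adj : ∀ p ∈ u, ∀ q ∈ u, p ≠ q → (zdg B.mulB).Adj p q := fun p hp q hq hpq =>
        htc (Finset.mem_coe.mpr (hu hp)) (Finset.mem_coe.mpr (hu hq)) hpq
      have hx : x ∈ u.erase w := by rw [hxyz]; simp
      have hy : y ∈ u.erase w := by rw [hxyz]; simp
      have hz : z ∈ u.erase w := by rw [hxyz]; simp
      exact cf4 w x y z
        (adj w hw x (Finset.mem_of_mem_erase hx) (Ne.symm (Finset.ne_of_mem_erase hx)))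
        (adj w hw y (Finset.mem_of_mem_erase hy) (Ne.symm (Finset.ne_of_mem_erase hy)))
        (adj w hw z (Finset.mem_of_mem_erase hz) (Ne.symm (Finset.ne_of_mem_erase hz)))
        (adj x (Finset.mem_of_mem_erase hx) y (Finset.mem_of_mem_erase hy) hxy)
        (adj x (Finset.mem_of_mem_erase hx) z (Finset.mem_of_mem_erase hz) hxz)
        (adj y (Finset.mem_of_mem_erase hy) z (Finset.mem_of_mem_erase hz) hyz)
    refine le_antisymm (csSup_le ⟨3, mem3⟩ bound) (le_csSup ⟨3, bound⟩ mem3)
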